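/- Let X ~ Gamma(α₁, λ) and Y ~ Gamma(α₂, λ) be independent with common rate, and let p > max{−1, −1−α₁, −1−α₂}. Then ∫_{1/2}^1 y^p [1 − P(1−y < X/(X+Y) < y)] dy = (1/(p+1)) · { (B(α₁+p+1, α₂)/B(α₁,α₂))·[1 − I_{1/2}(α₁+p+1, α₂)] + (B(α₁, α₂+p+1)/B(α₁,α₂))·I_{1/2}(α₁, α₂+p+1) − (1/2)^{p+1} }. -/

import Mathlib

open MeasureTheory Real Set ProbabilityTheory
open scoped ENNReal

/-- The (complete) beta function `B(a,b) = Γ(a)Γ(b)/Γ(a+b)`. -/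
noncomputable def betaFn (a b : ℝ) : ℝ := Real.Gamma a * Real.Gamma b / Real.Gamma (a + b)

/-- The regularized incomplete beta function `I_x(a,b) = (∫₀^x t^(a-1)(1-t)^(b-1) dt)/B(a,b)`. -/
noncomputable def regIncBeta (x a b : ℝ) : ℝ :=
  (∫ t in (0:ℝ)..x, t ^ (a - 1) * (1 - t) ^ (b - 1)) / betaFn a b

lemma betaFn_pos {a b : ℝ} (ha : 0 < a) (hb : 0 < b) : 0 < betaFn a b := by
  unfold betaFn
  have := Real.Gamma_pos_of_pos ha
  have := Real.Gamma_pos_of_pos hb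
  have := Real.Gamma_pos_of_pos (add_pos ha hb)
  positivity

lemma cpow_cast_aux {x c : ℝ} (hx : 0 ≤ x) : (x:ℂ) ^ ((c:ℂ)-1) = ((x ^ (c-1) : ℝ) : ℂ) := by
  rw [show ((c:ℂ)-1) = ((c-1 : ℝ):ℂ) by push_cast; ring, ← Complex.ofReal_cpow hx]

lemma beta_integrand_cast {a b x : ℝ} (hx0 : 0 ≤ x) (hx1 : x ≤ 1) :
    (x:ℂ) ^ ((a:ℂ)-1) * ((1:ℂ)-x) ^ ((b:ℂ)-1) = ((x ^ (a-1) * (1-x) ^ (b-1) : ℝ) : ℂ) := by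
  rw [show ((1:ℂ)-(x:ℂ)) = (((1-x : ℝ)):ℂ) by push_cast; ring]
  rw [cpow_cast_aux hx0, cpow_cast_aux (by linarith)]
  push_cast; ring

lemma integrableOn_beta {a b : ℝ} (ha : 0 < a) (hb : 0 < b) :
    IntegrableOn (fun v : ℝ => v ^ (a-1) * (1-v) ^ (b-1)) (Ioc 0 1) := by
  have h := Complex.betaIntegral_convergent (u := (a:ℂ)) (v := (b:ℂ)) (by simpa) (by simpa)
  have h2 : IntegrableOn (fun x : ℝ => (x:ℂ) ^ ((a:ℂ)-1) * ((1:ℂ)-x) ^ ((b:ℂ)-1)) (Ioc 0 1) :=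
    (intervalIntegrable_iff_integrableOn_Ioc_of_le zero_le_one).mp h
  have h3 := h2.re
  apply h3.congr
  rw [Filter.eventuallyEq_iff_exists_mem]
  refine ⟨Ioc 0 1, self_mem_ae_restrict measurableSet_Ioc, fun x hx => ?_⟩
  show RCLike.re ((x:ℂ) ^ ((a:ℂ)-1) * ((1:ℂ)-x) ^ ((b:ℂ)-1)) = _
  rw [beta_integrand_cast (le_of_lt hx.1) hx.2]
  simp

lemma integral_beta {a b : ℝ} (ha : 0 < a) (hb : 0 < b) :
    ∫ v in Ioc (0:ℝ) 1, v ^ (a-1) * (1-v) ^ (b-1) = betaFn a b := by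
  have key := Complex.Gamma_mul_Gamma_eq_betaIntegral
    (s := (a:ℂ)) (t := (b:ℂ)) (by simpa) (by simpa)
  have hbi : Complex.betaIntegral a b = ((∫ v in Ioc (0:ℝ) 1, v ^ (a-1) * (1-v) ^ (b-1) : ℝ) : ℂ) := by
    rw [Complex.betaIntegral, intervalIntegral.integral_of_le zero_le_one]
    calc ∫ x in Ioc (0:ℝ) 1, (x:ℂ) ^ ((a:ℂ)-1) * ((1:ℂ)-x) ^ ((b:ℂ)-1)
        = ∫ x in Ioc (0:ℝ) 1, ((x ^ (a-1) * (1-x) ^ (b-1) : ℝ) : ℂ) := by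
          apply setIntegral_congr_fun measurableSet_Ioc
          intro x hx
          exact beta_integrand_cast (le_of_lt hx.1) hx.2
      _ = _ := integral_ofReal
  rw [hbi] at key
  have hG : Complex.Gamma ((a:ℂ)+(b:ℂ)) = ((Real.Gamma (a+b) : ℝ) : ℂ) := by
    rw [← Complex.ofReal_add, Complex.Gamma_ofReal]
  rw [Complex.Gamma_ofReal, Complex.Gamma_ofReal, hG, ← Complex.ofReal_mul, ← Complex.ofReal_mul] at key
  have := Complex.ofReal_inj.mp key
  unfold betaFn
  rw [this]
  field_simp [(Real.Gamma_pos_of_pos (add_pos ha hb)).ne']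

lemma integrableOn_rpow_exp {a r : ℝ} (ha : 0 < a) (hr : 0 < r) :
    IntegrableOn (fun t : ℝ => t ^ (a-1) * exp (-(r*t))) (Ioi 0) := by
  have h := integrableOn_rpow_mul_exp_neg_mul_rpow (p := 1) (s := a - 1) (b := r)
    (by linarith) one_pos hr
  apply h.congr_fun ?_ measurableSet_Ioi
  intro x hx
  simp only [Real.rpow_one]
  ring_nf

lemma lintegral_rpow_exp {a r : ℝ} (ha : 0 < a) (hr : 0 < r) :
    ∫⁻ t in Ioi (0:ℝ), ENNReal.ofReal (t ^ (a-1) * exp (-(r*t)))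
      = ENNReal.ofReal ((1/r) ^ a * Real.Gamma a) := by
  rw [← integral_rpow_mul_exp_neg_mul_Ioi ha hr]
  rw [← ofReal_integral_eq_lintegral_ofReal (integrableOn_rpow_exp ha hr)]
  exact (ae_restrict_iff' measurableSet_Ioi).mpr (ae_of_all _ fun x (hx : 0 < x) => by positivity)

lemma lintegral_image_deriv {s : Set ℝ} {f f' : ℝ → ℝ} (hs : MeasurableSet s)
    (hf' : ∀ x ∈ s, HasDerivWithinAt f (f' x) s x) (hf : InjOn f s) (g : ℝ → ℝ≥0∞) :
    ∫⁻ x in f '' s, g x = ∫⁻ x in s, ENNReal.ofReal |f' x| * g (f x) := by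
  simpa only [ContinuousLinearMap.det_toSpanSingleton] using
    lintegral_image_eq_lintegral_abs_det_fderiv_mul volume hs
      (fun x hx => (hf' x hx).hasFDerivWithinAt) hf g


-- drop helper
lemma lintegral_drop_Iic {h : ℝ → ℝ≥0∞} (h0 : ∀ x < (0:ℝ), h x = 0) :
    ∫⁻ x, h x = ∫⁻ x in Ioi (0:ℝ), h x := by
  rw [← lintegral_add_compl h measurableSet_Ioi, compl_Ioi]
  have : ∫⁻ x in Iic (0:ℝ), h x = 0 := by
    rw [lintegral_Iic_eq_lintegral_Iio_add_Icc h le_rfl, Icc_self]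
    rw [setLIntegral_congr_fun_ae measurableSet_Iio (ae_of_all _ (fun x hx => h0 x hx))]
    simp
  rw [this, add_zero]

lemma image_mul_Ioi {t : ℝ} (ht : 0 < t) : (fun u : ℝ => t * u) '' Ioi 0 = Ioi (0:ℝ) := by
  ext x
  constructor
  · rintro ⟨u, hu, rfl⟩
    exact mul_pos ht hu
  · intro hx
    have hx' : (0:ℝ) < x := hx
    exact ⟨x / t, div_pos hx' ht, by field_simp⟩

lemma image_ratio : (fun v : ℝ => v / (1 - v)) '' Ioo 0 1 = Ioi (0:ℝ) := by
  ext x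
  constructor
  · rintro ⟨v, hv, rfl⟩
    exact div_pos hv.1 (by linarith [hv.2])
  · intro hx
    have hx' : (0:ℝ) < x := hx
    refine ⟨x / (1 + x), ⟨div_pos hx (by linarith), ?_⟩, ?_⟩
    · rw [div_lt_one (by linarith)]; linarith
    · have h1 : (1:ℝ) + x ≠ 0 := by linarith
      field_simp
      ring


lemma real_alg1 {α₁ α₂ l t u : ℝ} (hl : 0 < l) (ht : 0 < t) (hu : 0 < u) :
    (l ^ α₂ / Gamma α₂ * t ^ (α₂-1) * exp (-(l*t))) *
      (t * (l ^ α₁ / Gamma α₁ * (t*u) ^ (α₁-1) * exp (-(l*(t*u)))))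
    = (l ^ (α₁+α₂) / (Gamma α₁ * Gamma α₂) * u ^ (α₁-1)) *
        (t ^ ((α₁+α₂)-1) * exp (-((l*(1+u))*t))) := by
  rw [Real.mul_rpow ht.le hu.le,
      show t ^ ((α₁+α₂)-1) = t ^ (α₂-1) * t ^ (1:ℝ) * t ^ (α₁-1) by
        rw [← Real.rpow_add ht, ← Real.rpow_add ht]; ring_nf,
      Real.rpow_add hl α₁ α₂,
      Real.rpow_one,
      show exp (-((l*(1+u))*t)) = exp (-(l*t)) * exp (-(l*(t*u))) by
        rw [← Real.exp_add]; congr 1; ring]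
  ring

lemma real_alg2 {α₁ α₂ l u : ℝ} (hα₁ : 0 < α₁) (hα₂ : 0 < α₂) (hl : 0 < l) (hu : 0 < u) :
    (l ^ (α₁+α₂) / (Gamma α₁ * Gamma α₂) * u ^ (α₁-1)) *
      ((1/(l*(1+u))) ^ (α₁+α₂) * Gamma (α₁+α₂))
    = u ^ (α₁-1) * (1+u) ^ (-(α₁+α₂)) / betaFn α₁ α₂ := by
  have h1u : (0:ℝ) < 1 + u := by linarith
  have hG1 := Real.Gamma_pos_of_pos hα₁
  have hG2 := Real.Gamma_pos_of_pos hα₂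
  have hls : (0:ℝ) < l ^ (α₁+α₂) := Real.rpow_pos_of_pos hl _
  rw [show (1/(l*(1+u))) = (1/l)*(1/(1+u)) by field_simp,
      Real.mul_rpow (by positivity) (by positivity),
      one_div l, one_div (1+u),
      Real.inv_rpow hl.le, Real.inv_rpow h1u.le,
      Real.rpow_neg h1u.le]
  unfold betaFn
  field_simp

lemma real_alg3 {α₁ α₂ B v : ℝ} (hv : 0 < v) (hv1 : v < 1) :
    (((1-v)^2)⁻¹) * ((v/(1-v)) ^ (α₁-1) * (1 + v/(1-v)) ^ (-(α₁+α₂)) / B)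
    = v ^ (α₁-1) * (1-v) ^ (α₂-1) / B := by
  have hw : (0:ℝ) < 1 - v := by linarith
  have key : (((1-v)^2)⁻¹) * ((v/(1-v)) ^ (α₁-1) * (1 + v/(1-v)) ^ (-(α₁+α₂)))
      = v ^ (α₁-1) * (1-v) ^ (α₂-1) := by
    rw [show (1 + v/(1-v)) = 1/(1-v) by field_simp; ring,
        Real.div_rpow hv.le hw.le,
        one_div (1-v), Real.inv_rpow hw.le, Real.rpow_neg hw.le, inv_inv,
        show (1-v) ^ (α₁+α₂) = (1-v) ^ (α₂-1) * (1-v) ^ (α₁-1) * (1-v) ^ (2:ℝ) by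
          rw [← Real.rpow_add hw, ← Real.rpow_add hw]; ring_nf,
        Real.rpow_two]
    have h1 : (1-v) ^ (α₁-1) ≠ 0 := (Real.rpow_pos_of_pos hw _).ne'
    have h2 : ((1-v):ℝ) ^ (2:ℕ) ≠ 0 := pow_ne_zero _ hw.ne'
    field_simp
  rw [div_eq_mul_inv, div_eq_mul_inv, ← key]
  ring

lemma lintegral_gamma_ratio {α₁ α₂ l : ℝ} (hα₁ : 0 < α₁) (hα₂ : 0 < α₂) (hl : 0 < l)
    (g : ℝ → ℝ≥0∞) (hg : Measurable g) :
    ∫⁻ q : ℝ × ℝ, g (q.1 / (q.1 + q.2)) ∂((gammaMeasure α₁ l).prod (gammaMeasure α₂ l)) =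
      ∫⁻ v in Ioo (0:ℝ) 1, g v * ENNReal.ofReal (v ^ (α₁-1) * (1-v) ^ (α₂-1) / betaFn α₁ α₂) := by
  haveI := isProbabilityMeasure_gammaMeasure hα₁ hl
  haveI := isProbabilityMeasure_gammaMeasure hα₂ hl
  have hpdf₁ : Measurable (gammaPDF α₁ l) := (measurable_gammaPDFReal α₁ l).ennreal_ofReal
  have hpdf₂ : Measurable (gammaPDF α₂ l) := (measurable_gammaPDFReal α₂ l).ennreal_ofReal
  have hratio : Measurable (fun q : ℝ × ℝ => g (q.1 / (q.1 + q.2))) :=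
    hg.comp (measurable_fst.div (measurable_fst.add measurable_snd))
  have hK : Measurable fun t : ℝ => ∫⁻ x, g (x / (x + t)) ∂(gammaMeasure α₁ l) :=
    Measurable.lintegral_prod_left' hratio
  have C1 : ∀ t : ℝ, 0 < t → (∫⁻ x, g (x / (x + t)) ∂(gammaMeasure α₁ l))
      = ∫⁻ u in Ioi (0:ℝ), ENNReal.ofReal t * (gammaPDF α₁ l (t*u) * g (u/(u+1))) := by
    intro t ht
    have hgx : Measurable fun x : ℝ => g (x / (x + t)) :=
      hg.comp (Measurable.div (f := fun x : ℝ => x) (g := fun x : ℝ => x + t)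
        measurable_id (measurable_id.add_const t))
    rw [gammaMeasure, lintegral_withDensity_eq_lintegral_mul volume hpdf₁ hgx]
    rw [lintegral_drop_Iic (fun x hx => by simp [Pi.mul_apply, gammaPDF_of_neg hx])]
    conv_lhs => rw [← image_mul_Ioi ht]
    rw [lintegral_image_deriv (f := fun u : ℝ => t * u)
      (f' := fun _ : ℝ => t) measurableSet_Ioi
      (fun u _ => by
        have h : HasDerivAt (fun u : ℝ => t * u) t u := by
          simpa using (hasDerivAt_id u).const_mul t
        exact h.hasDerivWithinAt)
      (fun a _ b _ hab => mul_left_cancel₀ ht.ne' hab)]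
    refine setLIntegral_congr_fun_ae (measurableSet_Ioi : MeasurableSet (Ioi (0:ℝ))) (ae_of_all _ fun u hu => ?_)
    have hu' : (0:ℝ) < u := hu
    rw [abs_of_pos ht, Pi.mul_apply,
      show t*u + t = t*(u+1) by ring, mul_div_mul_left _ _ ht.ne']
  have C2 : ∀ u : ℝ, 0 < u → (∫⁻ t in Ioi (0:ℝ), gammaPDF α₂ l t * (ENNReal.ofReal t * gammaPDF α₁ l (t*u)))
      = ENNReal.ofReal (u ^ (α₁-1) * (1+u) ^ (-(α₁+α₂)) / betaFn α₁ α₂) := by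
    intro u hu
    have h1u : (0:ℝ) < 1 + u := by linarith
    have hs : 0 < α₁ + α₂ := by linarith
    have hr : 0 < l * (1 + u) := by positivity
    have step : ∀ t ∈ Ioi (0:ℝ), gammaPDF α₂ l t * (ENNReal.ofReal t * gammaPDF α₁ l (t*u))
        = ENNReal.ofReal (l ^ (α₁+α₂) / (Gamma α₁ * Gamma α₂) * u ^ (α₁-1))
            * ENNReal.ofReal (t ^ ((α₁+α₂)-1) * exp (-((l*(1+u))*t))) := by
      intro t ht
      have ht' : (0:ℝ) < t := ht
      rw [gammaPDF_of_nonneg ht'.le, gammaPDF_of_nonneg (by positivity : (0:ℝ) ≤ t*u),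
        ← ENNReal.ofReal_mul (by positivity), ← ENNReal.ofReal_mul (by positivity),
        ← ENNReal.ofReal_mul (by positivity)]
      rw [real_alg1 hl ht' hu]
    rw [setLIntegral_congr_fun_ae measurableSet_Ioi (ae_of_all _ step)]
    rw [lintegral_const_mul' _ _ ENNReal.ofReal_ne_top, lintegral_rpow_exp hs hr]
    rw [← ENNReal.ofReal_mul (by positivity), real_alg2 hα₁ hα₂ hl hu]
  rw [lintegral_prod_symm _ hratio.aemeasurable]
  calc ∫⁻ t, (∫⁻ x, g (x / (x + t)) ∂(gammaMeasure α₁ l)) ∂(gammaMeasure α₂ l)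
      = ∫⁻ t, (gammaPDF α₂ l * fun t => ∫⁻ x, g (x / (x + t)) ∂(gammaMeasure α₁ l)) t := by
        rw [(by rfl : gammaMeasure α₂ l = volume.withDensity (gammaPDF α₂ l)),
          lintegral_withDensity_eq_lintegral_mul volume hpdf₂ hK]
    _ = ∫⁻ t in Ioi (0:ℝ), (gammaPDF α₂ l * fun t => ∫⁻ x, g (x / (x + t)) ∂(gammaMeasure α₁ l)) t :=
        lintegral_drop_Iic (fun t htneg => by simp [Pi.mul_apply, gammaPDF_of_neg htneg])
    _ = ∫⁻ t in Ioi (0:ℝ), ∫⁻ u in Ioi (0:ℝ),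
          gammaPDF α₂ l t * (ENNReal.ofReal t * (gammaPDF α₁ l (t*u) * g (u/(u+1)))) := by
        refine setLIntegral_congr_fun_ae measurableSet_Ioi (ae_of_all _ fun t ht => ?_)
        rw [Pi.mul_apply, C1 t ht]
        exact (lintegral_const_mul' (gammaPDF α₂ l t) _
          (by rw [gammaPDF_eq]; exact ENNReal.ofReal_ne_top)).symm
    _ = ∫⁻ u in Ioi (0:ℝ), ∫⁻ t in Ioi (0:ℝ),
          gammaPDF α₂ l t * (ENNReal.ofReal t * (gammaPDF α₁ l (t*u) * g (u/(u+1)))) := by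
        refine lintegral_lintegral_swap ?_
        apply Measurable.aemeasurable
        apply Measurable.mul (hpdf₂.comp measurable_fst)
        apply Measurable.mul (ENNReal.measurable_ofReal.comp measurable_fst)
        exact Measurable.mul (hpdf₁.comp (measurable_fst.mul measurable_snd))
          (hg.comp (measurable_snd.div (measurable_snd.add_const 1)))
    _ = ∫⁻ u in Ioi (0:ℝ),
          ENNReal.ofReal (u ^ (α₁-1) * (1+u) ^ (-(α₁+α₂)) / betaFn α₁ α₂) * g (u/(u+1)) := by
        refine setLIntegral_congr_fun_ae measurableSet_Ioi (ae_of_all _ fun u hu => ?_)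
        have : ∀ t : ℝ, gammaPDF α₂ l t * (ENNReal.ofReal t * (gammaPDF α₁ l (t*u) * g (u/(u+1))))
            = (gammaPDF α₂ l t * (ENNReal.ofReal t * gammaPDF α₁ l (t*u))) * g (u/(u+1)) := by
          intro t; ring
        simp_rw [this]
        rw [lintegral_mul_const _ (show Measurable fun t : ℝ =>
            gammaPDF α₂ l t * (ENNReal.ofReal t * gammaPDF α₁ l (t*u)) from
          hpdf₂.mul (ENNReal.measurable_ofReal.mul (hpdf₁.comp (measurable_mul_const u)))),
          C2 u hu]
    _ = ∫⁻ v in Ioo (0:ℝ) 1, g v * ENNReal.ofReal (v ^ (α₁-1) * (1-v) ^ (α₂-1) / betaFn α₁ α₂) := by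
        rw [← image_ratio, lintegral_image_deriv (f := fun v : ℝ => v / (1 - v))
          (f' := fun v : ℝ => ((1-v)^2)⁻¹) measurableSet_Ioo
          (fun v hv => by
            simp only [mem_Ioo] at hv
            have hw : (1:ℝ) - v ≠ 0 := by linarith [hv.2]
            have h : HasDerivAt (fun y : ℝ => y / (1 - y))
                ((1*(1-v) - v*(0-1))/((1-v)^2)) v :=
              (hasDerivAt_id v).div ((hasDerivAt_const v (1:ℝ)).sub (hasDerivAt_id v)) hw
            have h2 : HasDerivAt (fun y : ℝ => y / (1 - y)) (((1-v)^2)⁻¹) v := by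
              convert h using 1
              field_simp
              ring
            exact h2.hasDerivWithinAt)
          (fun a ha b hb hab => by
            simp only [mem_Ioo] at ha hb
            have h1 : (1:ℝ) - a ≠ 0 := by linarith [ha.2]
            have h2 : (1:ℝ) - b ≠ 0 := by linarith [hb.2]
            field_simp at hab
            nlinarith [hab])]
        refine setLIntegral_congr_fun_ae measurableSet_Ioo (ae_of_all _ fun v hv => ?_)
        simp only [mem_Ioo] at hv
        have hw : (0:ℝ) < 1 - v := by linarith [hv.2]
        have harg : (v/(1-v))/((v/(1-v))+1) = v := by
          rw [show v/(1-v) + 1 = 1/(1-v) by field_simp; ring, div_div,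
            mul_one_div_cancel hw.ne', div_one]
        rw [abs_of_pos (by positivity : (0:ℝ) < ((1-v)^2)⁻¹), harg,
          ← mul_assoc, ← ENNReal.ofReal_mul (by positivity), real_alg3 hv.1 hv.2, mul_comm]

lemma gammaMeasure_Iic_zero {a rr : ℝ} : gammaMeasure a rr (Iic 0) = 0 := by
  rw [gammaMeasure, withDensity_apply _ measurableSet_Iic,
    lintegral_Iic_eq_lintegral_Iio_add_Icc _ le_rfl, Icc_self,
    setLIntegral_congr_fun_ae (g := fun _ => 0) measurableSet_Iio
      (ae_of_all _ fun x hx => gammaPDF_of_neg hx),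
    lintegral_zero, zero_add]
  exact setLIntegral_measure_zero _ _ (measure_singleton 0)


set_option maxHeartbeats 2000000 in
/-- For independent `X ~ Gamma(α₁, λ)`, `Y ~ Gamma(α₂, λ)` with common rate and
`p > max{−1, −1−α₁, −1−α₂}`:
`∫_{1/2}^1 y^p (1 − P(1−y < X/(X+Y) < y)) dy` has the stated closed form. -/
theorem xi_closed_form {Ω : Type*} [MeasurableSpace Ω]
    (P : Measure Ω) [IsProbabilityMeasure P] (X Y : Ω → ℝ)
    (hX : Measurable X) (hY : Measurable Y)
    (α₁ α₂ l p : ℝ) (hα₁ : 0 < α₁) (hα₂ : 0 < α₂) (hl : 0 < l)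
    (hp : max (max (-1) (-1 - α₁)) (-1 - α₂) < p)
    (hXlaw : Measure.map X P = gammaMeasure α₁ l)
    (hYlaw : Measure.map Y P = gammaMeasure α₂ l)
    (hindep : IndepFun X Y P) :
    ∫ y in Ioo (1/2 : ℝ) 1,
        y ^ p * (1 - (P {ω | 1 - y < X ω / (X ω + Y ω) ∧ X ω / (X ω + Y ω) < y}).toReal)
      = (1 / (p + 1)) *
        (betaFn (α₁ + p + 1) α₂ / betaFn α₁ α₂ * (1 - regIncBeta (1/2) (α₁ + p + 1) α₂) +
          betaFn α₁ (α₂ + p + 1) / betaFn α₁ α₂ * regIncBeta (1/2) α₁ (α₂ + p + 1) -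
          (1/2 : ℝ) ^ (p + 1)) := by
  obtain ⟨hp', hp3⟩ := max_lt_iff.mp hp
  obtain ⟨hp1, hp2⟩ := max_lt_iff.mp hp'
  have hp1' : 0 < p + 1 := by linarith
  have hB : 0 < betaFn α₁ α₂ := betaFn_pos hα₁ hα₂
  haveI := isProbabilityMeasure_gammaMeasure hα₁ hl
  haveI := isProbabilityMeasure_gammaMeasure hα₂ hl
  set μ : Measure (ℝ × ℝ) := (gammaMeasure α₁ l).prod (gammaMeasure α₂ l) with hμ
  haveI : IsProbabilityMeasure μ := by rw [hμ]; infer_instance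
  set r : ℝ × ℝ → ℝ := fun q => q.1 / (q.1 + q.2) with hr
  have hrm : Measurable r := measurable_fst.div (measurable_fst.add measurable_snd)
  set M : ℝ × ℝ → ℝ := fun q => max (r q) (1 - r q) with hM
  have hMm : Measurable M := hrm.max (measurable_const.sub hrm)
  have hmap : Measure.map (fun ω => (X ω, Y ω)) P = μ := by
    rw [hμ, ← hXlaw, ← hYlaw]
    exact (indepFun_iff_map_prod_eq_prod_map_map hX.aemeasurable hY.aemeasurable).mp hindep
  have hae : ∀ᵐ q ∂μ, 0 < q.1 ∧ 0 < q.2 := by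
    rw [ae_iff]
    have hsub : {q : ℝ × ℝ | ¬(0 < q.1 ∧ 0 < q.2)} ⊆ (Iic 0 ×ˢ univ) ∪ (univ ×ˢ Iic 0) := by
      intro q hq
      simp only [mem_setOf_eq, not_and_or, not_lt] at hq
      rcases hq with h | h
      · exact Or.inl ⟨h, mem_univ _⟩
      · exact Or.inr ⟨mem_univ _, h⟩
    refine measure_mono_null hsub (measure_union_null ?_ ?_)
    · rw [hμ, Measure.prod_prod, gammaMeasure_Iic_zero, zero_mul]
    · rw [hμ, Measure.prod_prod, gammaMeasure_Iic_zero, mul_zero]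
  have key1 : ∀ y : ℝ, 1 - (P {ω | 1 - y < X ω / (X ω + Y ω) ∧ X ω / (X ω + Y ω) < y}).toReal
      = (μ {q | y ≤ M q}).toReal := by
    intro y
    have hT : MeasurableSet {q : ℝ × ℝ | 1 - y < r q ∧ r q < y} :=
      (measurableSet_lt measurable_const hrm).inter (measurableSet_lt hrm measurable_const)
    have hPS : P {ω | 1 - y < X ω / (X ω + Y ω) ∧ X ω / (X ω + Y ω) < y}
        = μ {q : ℝ × ℝ | 1 - y < r q ∧ r q < y} := by
      rw [← hmap, Measure.map_apply (hX.prodMk hY) hT]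
      rfl
    have hcompl : {q : ℝ × ℝ | 1 - y < r q ∧ r q < y}ᶜ = {q | y ≤ M q} := by
      ext q
      simp only [mem_compl_iff, mem_setOf_eq, not_and_or, not_lt, hM, le_max_iff]
      constructor
      · rintro (h | h)
        · right; linarith
        · left; exact h
      · rintro (h | h)
        · right; exact h
        · left; linarith
    rw [hPS, ← hcompl, prob_compl_eq_one_sub hT,
      ENNReal.toReal_sub_of_le prob_le_one ENNReal.one_ne_top, ENNReal.toReal_one]
  have hLHSint : ∫ y in Ioo (1/2:ℝ) 1,
        y ^ p * (1 - (P {ω | 1 - y < X ω / (X ω + Y ω) ∧ X ω / (X ω + Y ω) < y}).toReal)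
      = ∫ y in Ioo (1/2:ℝ) 1, y ^ p * (μ {q | y ≤ M q}).toReal := by
    refine setIntegral_congr_fun measurableSet_Ioo fun y _ => ?_
    rw [key1 y]
  rw [hLHSint]
  set U : Set (ℝ × (ℝ × ℝ)) := {z | z.1 ≤ M z.2} with hU
  have hUm : MeasurableSet U := measurableSet_le measurable_fst (hMm.comp measurable_snd)
  have hmeasy : Measurable fun y : ℝ => μ {q | y ≤ M q} :=
    measurable_measure_prodMk_left hUm
  have hnn : 0 ≤ᵐ[volume.restrict (Ioo (1/2:ℝ) 1)]
      fun y => y ^ p * (μ {q | y ≤ M q}).toReal := by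
    refine (ae_restrict_iff' measurableSet_Ioo).mpr (ae_of_all _ fun y hy => ?_)
    have hy0 : (0:ℝ) < y := lt_trans one_half_pos hy.1
    have h1 : (0:ℝ) ≤ y ^ p := Real.rpow_nonneg hy0.le p
    exact mul_nonneg h1 ENNReal.toReal_nonneg
  have hsm : AEStronglyMeasurable (fun y => y ^ p * (μ {q | y ≤ M q}).toReal)
      (volume.restrict (Ioo (1/2:ℝ) 1)) :=
    (((by fun_prop : Measurable fun y : ℝ => y ^ p)).mul
      hmeasy.ennreal_toReal).aestronglyMeasurable.restrict
  rw [integral_eq_lintegral_of_nonneg_ae hnn hsm]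
  set c : ℝ := (1/2:ℝ) ^ (p+1) with hc
  have hc0 : 0 ≤ c := Real.rpow_nonneg (by norm_num) _
  set φ : ℝ → ℝ := fun v => ((max v (1-v)) ^ (p+1) - c)/(p+1) with hφ
  have hφm : Measurable φ := by fun_prop
  set g : ℝ → ℝ≥0∞ := fun v => ENNReal.ofReal (φ v) with hg
  have hgm : Measurable g := hφm.ennreal_ofReal
  have hφnn : ∀ v : ℝ, 0 ≤ φ v := by
    intro v
    have hm : (1/2:ℝ) ≤ max v (1-v) := by
      rcases le_total v (1/2) with h | h
      · exact le_max_of_le_right (by linarith)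
      · exact le_max_of_le_left h
    have h2 : c ≤ (max v (1-v)) ^ (p+1) :=
      Real.rpow_le_rpow (by norm_num) hm (le_of_lt hp1')
    exact div_nonneg (by linarith) hp1'.le
  -- Fubini / layer-cake step
  have B1 : ∫⁻ y in Ioo (1/2:ℝ) 1, ENNReal.ofReal (y ^ p * (μ {q | y ≤ M q}).toReal)
      = ∫⁻ q, g (r q) ∂μ := by
    have e1 : ∀ (y : ℝ) (q : ℝ × ℝ), U.indicator (fun _ => (1:ℝ≥0∞)) (y, q)
        = ({q | y ≤ M q} : Set (ℝ × ℝ)).indicator (fun _ => (1:ℝ≥0∞)) q := by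
      intro y q
      rfl
    calc ∫⁻ y in Ioo (1/2:ℝ) 1, ENNReal.ofReal (y ^ p * (μ {q | y ≤ M q}).toReal)
        = ∫⁻ y in Ioo (1/2:ℝ) 1, ∫⁻ q, ENNReal.ofReal (y ^ p)
            * U.indicator (fun _ => (1:ℝ≥0∞)) (y, q) ∂μ := by
          refine setLIntegral_congr_fun_ae measurableSet_Ioo (ae_of_all _ fun y hy => ?_)
          have hy0 : (0:ℝ) < y := lt_trans one_half_pos hy.1
          simp_rw [e1 y]
          rw [lintegral_const_mul' _ _ ENNReal.ofReal_ne_top,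
            lintegral_indicator (measurableSet_le measurable_const hMm), setLIntegral_one,
            ENNReal.ofReal_mul (Real.rpow_nonneg hy0.le p),
            ENNReal.ofReal_toReal (measure_ne_top μ _)]
      _ = ∫⁻ q, ∫⁻ y in Ioo (1/2:ℝ) 1, ENNReal.ofReal (y ^ p)
            * U.indicator (fun _ => (1:ℝ≥0∞)) (y, q) ∂volume ∂μ := by
          refine lintegral_lintegral_swap ?_
          apply Measurable.aemeasurable
          exact ((by fun_prop : Measurable fun z : ℝ × (ℝ × ℝ) => ENNReal.ofReal (z.1 ^ p))).mul
            (measurable_one.indicator hUm)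
      _ = ∫⁻ q, g (r q) ∂μ := by
          apply lintegral_congr_ae
          filter_upwards [hae] with q hq
          have h1 : 0 < r q := div_pos hq.1 (add_pos hq.1 hq.2)
          have h2 : r q < 1 := by
            show q.1 / (q.1 + q.2) < 1
            rw [div_lt_one (add_pos hq.1 hq.2)]
            linarith [hq.2]
          have hm1 : (1/2:ℝ) ≤ M q := by
            rcases le_total (r q) (1/2) with h | h
            · exact le_max_of_le_right (by linarith)
            · exact le_max_of_le_left h
          have hm2 : M q < 1 := max_lt h2 (by linarith)
          calc ∫⁻ y in Ioo (1/2:ℝ) 1, ENNReal.ofReal (y ^ p)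
                * U.indicator (fun _ => (1:ℝ≥0∞)) (y, q) ∂volume
              = ∫⁻ y in Ioo (1/2:ℝ) 1,
                  (Ioc (1/2:ℝ) (M q)).indicator (fun y => ENNReal.ofReal (y ^ p)) y ∂volume := by
                refine setLIntegral_congr_fun_ae measurableSet_Ioo (ae_of_all _ fun y hy => ?_)
                by_cases hle : y ≤ M q
                · rw [Set.indicator_of_mem (show (y, q) ∈ U from hle), mul_one,
                    Set.indicator_of_mem (show y ∈ Ioc (1/2:ℝ) (M q) from ⟨hy.1, hle⟩)]
                · rw [Set.indicator_of_notMem (show (y, q) ∉ U from hle), mul_zero,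
                    Set.indicator_of_notMem
                      (show y ∉ Ioc (1/2:ℝ) (M q) from fun hmem => hle hmem.2)]
            _ = ∫⁻ y in Ioc (1/2:ℝ) (M q), ENNReal.ofReal (y ^ p) ∂volume := by
                rw [lintegral_indicator measurableSet_Ioc,
                  Measure.restrict_restrict measurableSet_Ioc,
                  inter_eq_left.mpr (fun y (hy : y ∈ Ioc (1/2:ℝ) (M q)) =>
                    (show y ∈ Ioo (1/2:ℝ) 1 from ⟨hy.1, lt_of_le_of_lt hy.2 hm2⟩))]
            _ = ENNReal.ofReal (∫ y in Ioc (1/2:ℝ) (M q), y ^ p) := by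
                have hcont : ContinuousOn (fun y : ℝ => y ^ p) (Icc (1/2:ℝ) (M q)) :=
                  fun x hx => (Real.continuousAt_rpow_const x p
                    (Or.inl (by have := hx.1; positivity))).continuousWithinAt
                have hint : IntegrableOn (fun y : ℝ => y ^ p) (Ioc (1/2:ℝ) (M q)) :=
                  (hcont.integrableOn_compact isCompact_Icc).mono_set Ioc_subset_Icc_self
                rw [← ofReal_integral_eq_lintegral_ofReal hint
                  ((ae_restrict_iff' measurableSet_Ioc).mpr (ae_of_all _ fun y hy =>
                    Real.rpow_nonneg (by have := hy.1; positivity) p))]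
            _ = g (r q) := by
                rw [← intervalIntegral.integral_of_le hm1,
                  _root_.integral_rpow (Or.inl hp1)]
  rw [B1, hμ]
  simp only [hr]
  rw [lintegral_gamma_ratio hα₁ hα₂ hl g hgm]
  -- convert to a real integral
  set Bv : ℝ := betaFn α₁ α₂ with hBv
  set β : ℝ → ℝ := fun v => v ^ (α₁-1) * (1-v) ^ (α₂-1) / Bv with hβ
  have hβnn : ∀ v ∈ Ioo (0:ℝ) 1, 0 ≤ β v := fun v hv =>
    div_nonneg (mul_nonneg (Real.rpow_nonneg hv.1.le _)
      (Real.rpow_nonneg (by linarith [hv.2]) _)) hB.le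
  have hβint : IntegrableOn β (Ioo (0:ℝ) 1) :=
    (((integrableOn_beta hα₁ hα₂).mono_set Ioo_subset_Ioc_self).div_const Bv)
  have hInt : IntegrableOn (fun v => φ v * β v) (Ioo (0:ℝ) 1) := by
    refine hβint.bdd_mul (c := 1/(p+1)) hφm.aestronglyMeasurable.restrict ?_
    refine (ae_restrict_iff' measurableSet_Ioo).mpr (ae_of_all _ fun v hv => ?_)
    rw [Real.norm_eq_abs, abs_of_nonneg (hφnn v)]
    have hmax1 : max v (1-v) ≤ 1 := max_le hv.2.le (by linarith [hv.1])
    have hmax0 : (0:ℝ) ≤ max v (1-v) := le_max_of_le_left hv.1.le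
    have h1 : (max v (1-v)) ^ (p+1) ≤ 1 := Real.rpow_le_one hmax0 hmax1 hp1'.le
    rw [hφ]
    rw [div_le_div_iff₀ hp1' hp1']
    nlinarith
  have hstep : ∫⁻ v in Ioo (0:ℝ) 1,
        g v * ENNReal.ofReal (v ^ (α₁-1) * (1-v) ^ (α₂-1) / Bv)
      = ENNReal.ofReal (∫ v in Ioo (0:ℝ) 1, φ v * β v) := by
    have hpt : ∀ v ∈ Ioo (0:ℝ) 1, g v * ENNReal.ofReal (v ^ (α₁-1) * (1-v) ^ (α₂-1) / Bv)
        = ENNReal.ofReal (φ v * β v) := by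
      intro v hv
      rw [hg, ← ENNReal.ofReal_mul (hφnn v)]
    rw [setLIntegral_congr_fun_ae measurableSet_Ioo (ae_of_all _ hpt),
      ← ofReal_integral_eq_lintegral_ofReal hInt
        ((ae_restrict_iff' measurableSet_Ioo).mpr (ae_of_all _ fun v hv =>
          mul_nonneg (hφnn v) (hβnn v hv)))]
  rw [hstep, ENNReal.toReal_ofReal (setIntegral_nonneg measurableSet_Ioo
    (fun v hv => mul_nonneg (hφnn v) (hβnn v hv)))]
  -- final computation with real integrals
  have hb1 : 0 < betaFn (α₁+p+1) α₂ := betaFn_pos (by linarith) hα₂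
  have hb2 : 0 < betaFn α₁ (α₂+p+1) := betaFn_pos hα₁ (by linarith)
  have hi1 : IntegrableOn (fun v : ℝ => v ^ ((α₁+p+1)-1) * (1-v) ^ (α₂-1)) (Ioc 0 1) :=
    integrableOn_beta (by linarith) hα₂
  have hi2 : IntegrableOn (fun v : ℝ => v ^ (α₁-1) * (1-v) ^ ((α₂+p+1)-1)) (Ioc 0 1) :=
    integrableOn_beta hα₁ (by linarith)
  have hi0 : IntegrableOn (fun v : ℝ => v ^ (α₁-1) * (1-v) ^ (α₂-1)) (Ioc 0 1) :=
    integrableOn_beta hα₁ hα₂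
  have hsubL : Ioc (0:ℝ) (1/2) ⊆ Ioc (0:ℝ) 1 := Ioc_subset_Ioc_right (by norm_num)
  have hsubR : Ioo (1/2:ℝ) 1 ⊆ Ioc (0:ℝ) 1 := fun v hv => ⟨by linarith [hv.1], hv.2.le⟩
  have hsubL' : Ioc (0:ℝ) (1/2) ⊆ Ioo (0:ℝ) 1 := fun v hv => ⟨hv.1, by linarith [hv.2]⟩
  have hsubR' : Ioo (1/2:ℝ) 1 ⊆ Ioo (0:ℝ) 1 := fun v hv => ⟨by linarith [hv.1], hv.2⟩
  have hsplit : Ioo (0:ℝ) 1 = Ioc 0 (1/2) ∪ Ioo (1/2) 1 := by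
    ext v
    simp only [mem_Ioo, mem_Ioc, mem_union]
    constructor
    · rintro ⟨h0, h1⟩
      rcases le_or_gt v (1/2) with h | h
      · exact Or.inl ⟨h0, h⟩
      · exact Or.inr ⟨h, h1⟩
    · rintro (⟨h0, h⟩ | ⟨h, h1⟩)
      · exact ⟨h0, by linarith⟩
      · exact ⟨by linarith, h1⟩
  have hdisj : Disjoint (Ioc (0:ℝ) (1/2)) (Ioo (1/2:ℝ) 1) := by
    rw [Set.disjoint_left]
    intro v h1 h2
    exact absurd h2.1 (not_lt.mpr h1.2)
  rw [hsplit, setIntegral_union hdisj measurableSet_Ioo (hInt.mono_set hsubL')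
    (hInt.mono_set hsubR')]
  have hE2 : ∫ v in Ioc (0:ℝ) (1/2), φ v * β v
      = (1/((p+1)*Bv)) * (∫ v in Ioc (0:ℝ) (1/2), v ^ (α₁-1) * (1-v) ^ ((α₂+p+1)-1))
        - (c/((p+1)*Bv)) * (∫ v in Ioc (0:ℝ) (1/2), v ^ (α₁-1) * (1-v) ^ (α₂-1)) := by
    have hpt : ∀ v ∈ Ioc (0:ℝ) (1/2), φ v * β v
        = (1/((p+1)*Bv)) * (v ^ (α₁-1) * (1-v) ^ ((α₂+p+1)-1))
          - (c/((p+1)*Bv)) * (v ^ (α₁-1) * (1-v) ^ (α₂-1)) := by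
      intro v hv
      have hv0 : 0 < v := hv.1
      have hw : 0 < 1 - v := by have := hv.2; norm_num at this ⊢; linarith
      have hmax : max v (1-v) = 1 - v := max_eq_right (by linarith [hv.2])
      simp only [hφ, hβ, hmax]
      rw [show (1-v) ^ ((α₂+p+1)-1) = (1-v) ^ (p+1) * (1-v) ^ (α₂-1) by
        rw [← Real.rpow_add hw]; ring_nf]
      generalize (1-v) ^ (p+1) = X
      generalize v ^ (α₁-1) = Yv
      generalize (1-v) ^ (α₂-1) = W
      field_simp
    rw [setIntegral_congr_fun measurableSet_Ioc hpt,
      integral_sub ((hi2.mono_set hsubL).const_mul _) ((hi0.mono_set hsubL).const_mul _),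
      integral_const_mul, integral_const_mul]
  have hE1 : ∫ v in Ioo (1/2:ℝ) 1, φ v * β v
      = (1/((p+1)*Bv)) * (∫ v in Ioo (1/2:ℝ) 1, v ^ ((α₁+p+1)-1) * (1-v) ^ (α₂-1))
        - (c/((p+1)*Bv)) * (∫ v in Ioo (1/2:ℝ) 1, v ^ (α₁-1) * (1-v) ^ (α₂-1)) := by
    have hpt : ∀ v ∈ Ioo (1/2:ℝ) 1, φ v * β v
        = (1/((p+1)*Bv)) * (v ^ ((α₁+p+1)-1) * (1-v) ^ (α₂-1))
          - (c/((p+1)*Bv)) * (v ^ (α₁-1) * (1-v) ^ (α₂-1)) := by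
      intro v hv
      have hv0 : 0 < v := by have := hv.1; linarith
      have hmax : max v (1-v) = v := max_eq_left (by have := hv.1; linarith)
      simp only [hφ, hβ, hmax]
      rw [show v ^ ((α₁+p+1)-1) = v ^ (p+1) * v ^ (α₁-1) by
        rw [← Real.rpow_add hv0]; ring_nf]
      generalize v ^ (p+1) = X
      generalize v ^ (α₁-1) = Yv
      generalize (1-v) ^ (α₂-1) = W
      field_simp
    rw [setIntegral_congr_fun measurableSet_Ioo hpt,
      integral_sub ((hi1.mono_set hsubR).const_mul _) ((hi0.mono_set hsubR).const_mul _),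
      integral_const_mul, integral_const_mul]
  rw [hE2, hE1]
  have hIocsplit : Ioc (0:ℝ) 1 = Ioc 0 (1/2) ∪ Ioc (1/2) 1 :=
    (Ioc_union_Ioc_eq_Ioc (by norm_num) (by norm_num)).symm
  have hdisj2 : Disjoint (Ioc (0:ℝ) (1/2)) (Ioc (1/2:ℝ) 1) := by
    rw [Set.disjoint_left]
    intro v h1 h2
    exact absurd h2.1 (not_lt.mpr h1.2)
  have hsubR2 : Ioc (1/2:ℝ) 1 ⊆ Ioc (0:ℝ) 1 := Ioc_subset_Ioc_left (by norm_num)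
  have hsplit1 : betaFn (α₁+p+1) α₂
      = (∫ v in Ioc (0:ℝ) (1/2), v ^ ((α₁+p+1)-1) * (1-v) ^ (α₂-1))
        + ∫ v in Ioo (1/2:ℝ) 1, v ^ ((α₁+p+1)-1) * (1-v) ^ (α₂-1) := by
    rw [← integral_beta (show (0:ℝ) < α₁+p+1 by linarith) hα₂, hIocsplit,
      setIntegral_union hdisj2 measurableSet_Ioc (hi1.mono_set hsubL) (hi1.mono_set hsubR2)]
    congr 1
    exact integral_Ioc_eq_integral_Ioo
  have hsplit0 : Bv = (∫ v in Ioc (0:ℝ) (1/2), v ^ (α₁-1) * (1-v) ^ (α₂-1))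
        + ∫ v in Ioo (1/2:ℝ) 1, v ^ (α₁-1) * (1-v) ^ (α₂-1) := by
    rw [hBv, ← integral_beta hα₁ hα₂, hIocsplit,
      setIntegral_union hdisj2 measurableSet_Ioc (hi0.mono_set hsubL) (hi0.mono_set hsubR2)]
    congr 1
    exact integral_Ioc_eq_integral_Ioo
  have hreg1 : regIncBeta (1/2) (α₁+p+1) α₂
      = (∫ v in Ioc (0:ℝ) (1/2), v ^ ((α₁+p+1)-1) * (1-v) ^ (α₂-1)) / betaFn (α₁+p+1) α₂ := by
    unfold regIncBeta
    rw [intervalIntegral.integral_of_le (by norm_num)]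
  have hreg2 : regIncBeta (1/2) α₁ (α₂+p+1)
      = (∫ v in Ioc (0:ℝ) (1/2), v ^ (α₁-1) * (1-v) ^ ((α₂+p+1)-1)) / betaFn α₁ (α₂+p+1) := by
    unfold regIncBeta
    rw [intervalIntegral.integral_of_le (by norm_num)]
  rw [hreg1, hreg2]
  have e1 : ∫ v in Ioc (0:ℝ) (1/2), v ^ ((α₁+p+1)-1) * (1-v) ^ (α₂-1)
      = betaFn (α₁+p+1) α₂ - ∫ v in Ioo (1/2:ℝ) 1, v ^ ((α₁+p+1)-1) * (1-v) ^ (α₂-1) := by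
    linarith [hsplit1]
  have e0 : ∫ v in Ioc (0:ℝ) (1/2), v ^ (α₁-1) * (1-v) ^ (α₂-1)
      = Bv - ∫ v in Ioo (1/2:ℝ) 1, v ^ (α₁-1) * (1-v) ^ (α₂-1) := by
    linarith [hsplit0]
  rw [e1, e0]
  field_simp
  ring
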